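/- Let S be a monoid. Every indecomposable S-act is cancellable: if A is an indecomposable S-act and B, C are S-acts with A ⊔ B ≅ A ⊔ C, then B ≅ C. -/

import Mathlib

universe u v w

/-- A right `S`-act structure on a type `A`: a map `A × S → A`, `(a, s) ↦ a · s`,
with `a · 1 = a` and `a · (s*t) = (a · s) · t`. (`S`-acts are additionally required
to be nonempty; this is imposed via `Nonempty` hypotheses.) -/
class RAct (S : Type u) [Monoid S] (A : Type v) : Type (max u v) where
  act : A → S → A
  act_one : ∀ a : A, act a 1 = a
  act_mul : ∀ (a : A) (s t : S), act a (s * t) = act (act a s) t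

/-- Isomorphism of `S`-acts: a bijective action-preserving map. -/
def ActIso (S : Type u) [Monoid S] (A : Type v) (B : Type w) [RAct S A] [RAct S B] : Prop :=
  ∃ e : A ≃ B, ∀ (a : A) (s : S), e (RAct.act a s) = RAct.act (e a) s

/-- The coproduct (disjoint union) of two `S`-acts, with componentwise action. -/
instance sumRAct (S : Type u) [Monoid S] (A : Type v) (B : Type w) [RAct S A] [RAct S B] :
    RAct S (A ⊕ B) where
  act x s := Sum.map (fun a => RAct.act a s) (fun b => RAct.act b s) x
  act_one := by rintro (a | b) <;> simp [RAct.act_one]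
  act_mul := by rintro (a | b) s t <;> simp [RAct.act_mul]

/-- An `S`-act `A` is cancellable if `A ⊔ B ≅ A ⊔ C` implies `B ≅ C`
for all `S`-acts `B`, `C`. -/
def Cancellable (S : Type u) [Monoid S] (A : Type u) [RAct S A] : Prop :=
  ∀ (B C : Type u) [RAct S B] [RAct S C] [Nonempty B] [Nonempty C],
    ActIso S (A ⊕ B) (A ⊕ C) → ActIso S B C

/-- A subact of an `S`-act: a nonempty subset closed under the action. -/
def IsSubact (S : Type u) [Monoid S] {A : Type v} [RAct S A] (T : Set A) : Prop :=
  T.Nonempty ∧ ∀ a ∈ T, ∀ s : S, RAct.act a s ∈ T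

/-- An `S`-act is decomposable if it is the disjoint union of two subacts;
otherwise it is indecomposable. -/
def Decomposable (S : Type u) [Monoid S] (A : Type v) [RAct S A] : Prop :=
  ∃ T U : Set A, IsSubact S T ∧ IsSubact S U ∧ T ∪ U = Set.univ ∧ T ∩ U = ∅

/-- Every indecomposable `S`-act is cancellable. -/
lemma act_inl (S : Type u) [Monoid S] {A : Type v} {B : Type w} [RAct S A] [RAct S B]
    (a : A) (s : S) : RAct.act (Sum.inl a : A ⊕ B) s = Sum.inl (RAct.act a s) := rfl

lemma act_inr (S : Type u) [Monoid S] {A : Type v} {B : Type w} [RAct S A] [RAct S B]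
    (b : B) (s : S) : RAct.act (Sum.inr b : A ⊕ B) s = Sum.inr (RAct.act b s) := rfl

lemma dichotomy (S : Type u) [Monoid S] (A X Y : Type u)
    [RAct S A] [RAct S X] [RAct S Y] (hA : ¬ Decomposable S A)
    (e : A ⊕ X ≃ A ⊕ Y) (he : ∀ (x : A ⊕ X) (s : S), e (RAct.act x s) = RAct.act (e x) s) :
    (∀ a : A, ∃ a', e (Sum.inl a) = Sum.inl a') ∨ (∀ a : A, ∃ c, e (Sum.inl a) = Sum.inr c) := by
  by_contra hcon
  push_neg at hcon
  obtain ⟨⟨a₁, h1⟩, ⟨a₂, h2⟩⟩ := hcon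
  apply hA
  refine ⟨{a | ∃ a', e (Sum.inl a) = Sum.inl a'}, {a | ∃ c, e (Sum.inl a) = Sum.inr c}, ⟨⟨a₂, ?_⟩, ?_⟩, ⟨⟨a₁, ?_⟩, ?_⟩, ?_, ?_⟩
  · rcases h' : e (Sum.inl a₂) with a | c
    · exact ⟨a, h'⟩
    · exact absurd h' (h2 c)
  · rintro a ⟨a', ha'⟩ s
    exact ⟨RAct.act a' s, by rw [← act_inl S a s, he, ha', act_inl]⟩
  · rcases h' : e (Sum.inl a₁) with a | c
    · exact absurd h' (h1 a)
    · exact ⟨c, h'⟩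
  · rintro a ⟨c, hc⟩ s
    exact ⟨RAct.act c s, by rw [← act_inl S a s, he, hc, act_inr]⟩
  · ext a
    simp only [Set.mem_union, Set.mem_setOf_eq, Set.mem_univ, iff_true]
    rcases h' : e (Sum.inl a) with a' | c
    · exact Or.inl ⟨a', rfl⟩
    · exact Or.inr ⟨c, rfl⟩
  · ext a
    simp only [Set.mem_inter_iff, Set.mem_setOf_eq, Set.mem_empty_iff_false, iff_false]
    rintro ⟨⟨a', ha'⟩, ⟨c, hc⟩⟩
    rw [ha'] at hc
    exact absurd hc Sum.inl_ne_inr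

/-- Every indecomposable `S`-act is cancellable. -/
theorem indecomposable_cancellable (S : Type u) [Monoid S] (A : Type u)
    [RAct S A] [Nonempty A] (hA : ¬ Decomposable S A)
    (B C : Type u) [RAct S B] [RAct S C] [Nonempty B] [Nonempty C]
    (h : ActIso S (A ⊕ B) (A ⊕ C)) : ActIso S B C := by
  classical
  obtain ⟨e, he⟩ := h
  have he' : ∀ (y : A ⊕ C) (s : S), e.symm (RAct.act y s) = RAct.act (e.symm y) s := by
    intro y s
    apply e.injective
    rw [he, e.apply_symm_apply, e.apply_symm_apply]
  obtain a₀ := Classical.arbitrary A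
  rcases dichotomy S A B C hA e he with hAl | hAr
  · -- e maps A into A
    have hsymm : ∀ a : A, ∃ a', e.symm (Sum.inl a) = Sum.inl a' := by
      rcases dichotomy S A C B hA e.symm he' with h1 | h2
      · exact h1
      · obtain ⟨a', ha'⟩ := hAl a₀
        obtain ⟨b, hb⟩ := h2 a'
        rw [← ha', e.symm_apply_apply] at hb
        exact absurd hb (by simp)
    have hB : ∀ b : B, ∃ c : C, e (Sum.inr b) = Sum.inr c := by
      intro b
      rcases hb : e (Sum.inr b) with a | c
      · obtain ⟨a', ha'⟩ := hsymm a
        rw [← hb, e.symm_apply_apply] at ha'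
        exact absurd ha' (by simp)
      · exact ⟨c, rfl⟩
    have hC : ∀ c : C, ∃ b : B, e.symm (Sum.inr c) = Sum.inr b := by
      intro c
      rcases hc : e.symm (Sum.inr c) with a | b
      · obtain ⟨a', ha'⟩ := hAl a
        rw [← hc, e.apply_symm_apply] at ha'
        exact absurd ha' (by simp)
      · exact ⟨b, rfl⟩
    set f : B → C := fun b => Classical.choose (hB b) with hf
    set g : C → B := fun c => Classical.choose (hC c) with hg
    have hfs : ∀ b, e (Sum.inr b) = Sum.inr (f b) := fun b => Classical.choose_spec (hB b)
    have hgs : ∀ c, e.symm (Sum.inr c) = Sum.inr (g c) := fun c => Classical.choose_spec (hC c)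
    refine ⟨⟨f, g, ?_, ?_⟩, ?_⟩
    · intro b
      have := hgs (f b)
      rw [← hfs b, e.symm_apply_apply] at this
      exact Sum.inr_injective this.symm
    · intro c
      have := hfs (g c)
      rw [← hgs c, e.apply_symm_apply] at this
      exact Sum.inr_injective this.symm
    · intro b s
      have := he (Sum.inr b) s
      rw [act_inr, hfs, hfs, act_inr] at this
      exact Sum.inr_injective this
  · -- e maps A into C; then e.symm maps A into B
    have hsymm : ∀ a : A, ∃ b, e.symm (Sum.inl a) = Sum.inr b := by
      rcases dichotomy S A C B hA e.symm he' with h1 | h2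
      · obtain ⟨a', ha'⟩ := h1 a₀
        obtain ⟨c, hc⟩ := hAr a'
        rw [← ha', e.apply_symm_apply] at hc
        exact absurd hc (by simp)
      · exact h2
    have key : ∀ b : B, ∃ c : C, e (Sum.inr b) = Sum.inr c ∨
        (∃ a, e (Sum.inr b) = Sum.inl a ∧ e (Sum.inl a) = Sum.inr c) := by
      intro b
      rcases hb : e (Sum.inr b) with a | c
      · obtain ⟨c, hc⟩ := hAr a
        exact ⟨c, Or.inr ⟨a, rfl, hc⟩⟩
      · exact ⟨c, Or.inl rfl⟩
    set f : B → C := fun b => Classical.choose (key b) with hfdef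
    have hf : ∀ b : B, e (Sum.inr b) = Sum.inr (f b) ∨
        (∃ a, e (Sum.inr b) = Sum.inl a ∧ e (Sum.inl a) = Sum.inr (f b)) :=
      fun b => Classical.choose_spec (key b)
    have hinj : Function.Injective f := by
      intro b₁ b₂ hb
      rcases hf b₁ with h1 | ⟨a₁, h1, h1'⟩ <;> rcases hf b₂ with h2 | ⟨a₂, h2, h2'⟩
      · apply Sum.inr_injective (e.injective (by rw [h1, h2, hb]))
      · exfalso
        have : e (Sum.inr b₁) = e (Sum.inl a₂) := by rw [h1, hb, ← h2']
        exact absurd (e.injective this) Sum.inr_ne_inl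
      · exfalso
        have : e (Sum.inr b₂) = e (Sum.inl a₁) := by rw [h2, ← hb, ← h1']
        exact absurd (e.injective this) Sum.inr_ne_inl
      · have : a₁ = a₂ := Sum.inl_injective (e.injective (by rw [h1', h2', hb]))
        apply Sum.inr_injective (e.injective (by rw [h1, h2, this]))
    have hsurj : Function.Surjective f := by
      intro c
      rcases hc : e.symm (Sum.inr c) with a | b
      · -- e (inl a) = inr c; find b with e (inr b) = inl a
        have hac : e (Sum.inl a) = Sum.inr c := by rw [← hc, e.apply_symm_apply]
        obtain ⟨b, hb⟩ := hsymm a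
        have hba : e (Sum.inr b) = Sum.inl a := by rw [← hb, e.apply_symm_apply]
        refine ⟨b, ?_⟩
        rcases hf b with h1 | ⟨a', h1, h1'⟩
        · rw [hba] at h1; exact absurd h1 Sum.inl_ne_inr
        · rw [hba] at h1
          have := Sum.inl_injective h1
          rw [← this, hac] at h1'
          exact (Sum.inr_injective h1').symm
      · have hbc : e (Sum.inr b) = Sum.inr c := by rw [← hc, e.apply_symm_apply]
        refine ⟨b, ?_⟩
        rcases hf b with h1 | ⟨a', h1, h1'⟩
        · rw [hbc] at h1; exact (Sum.inr_injective h1).symm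
        · rw [hbc] at h1; exact absurd h1 Sum.inr_ne_inl
    refine ⟨Equiv.ofBijective f ⟨hinj, hsurj⟩, ?_⟩
    intro b s
    show f (RAct.act b s) = RAct.act (f b) s
    rcases hf b with h1 | ⟨a, h1, h1'⟩
    · have hact : e (Sum.inr (RAct.act b s)) = Sum.inr (RAct.act (f b) s) := by
        rw [← act_inr S b s, he, h1, act_inr]
      rcases hf (RAct.act b s) with h2 | ⟨a', h2, h2'⟩
      · rw [hact] at h2; exact Sum.inr_injective h2.symm
      · rw [hact] at h2; exact absurd h2 Sum.inr_ne_inl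
    · have hact : e (Sum.inr (RAct.act b s)) = Sum.inl (RAct.act a s) := by
        rw [← act_inr S b s, he, h1, act_inl]
      have hact' : e (Sum.inl (RAct.act a s)) = Sum.inr (RAct.act (f b) s) := by
        rw [← act_inl S a s, he, h1', act_inr]
      rcases hf (RAct.act b s) with h2 | ⟨a', h2, h2'⟩
      · rw [hact] at h2; exact absurd h2 Sum.inl_ne_inr
      · rw [hact] at h2
        have := Sum.inl_injective h2
        rw [← this, hact'] at h2'
        exact Sum.inr_injective h2'.symm
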